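/- arXiv:1610.02582 — 12 statements merged into one kernel-verified Lean document; each statement's English description precedes it below -/
import Mathlib

section
/- Let X = {1,2,3} and define m_s : X³ → [0,∞) to be the symmetric function (invariant under permutations of its three arguments) determined by m_s(1,2,3) = 6, m_s(1,1,2) = m_s(2,2,1) = m_s(1,1,1) = 8, m_s(1,1,3) = m_s(3,3,1) = m_s(3,3,2) = m_s(2,2,3) = 7, m_s(2,2,2) = 9, m_s(3,3,3) = 5. Then m_s is an M_s-metric on X, but m_s is not a partial S-metric on X (indeed m_s(1,1,1) > m_s(1,2,3), violating axiom (iii) of a partial S-metric). -/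
open Filter Topology

/-- `msmin m x y z = min {m(x,x,x), m(y,y,y), m(z,z,z)}`. -/
def msmin {X : Type*} (m : X → X → X → ℝ) (x y z : X) : ℝ :=
  min (m x x x) (min (m y y y) (m z z z))

/-- `msmax m x y z = max {m(x,x,x), m(y,y,y), m(z,z,z)}`. -/
def msmax {X : Type*} (m : X → X → X → ℝ) (x y z : X) : ℝ :=
  max (m x x x) (max (m y y y) (m z z z))

/-- `m` is an `Mₛ`-metric on `X`. -/
structure IsMsMetric {X : Type*} (m : X → X → X → ℝ) : Prop where
  nonneg : ∀ x y z, 0 ≤ m x y z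
  eq_iff : ∀ x y, (m x x x = m y y y ∧ m y y y = m x x y) ↔ x = y
  min_le : ∀ x y z, msmin m x y z ≤ m x y z
  symm : ∀ x y, m x x y = m y y x
  ineq : ∀ x y z t, m x y z - msmin m x y z ≤
    (m x x t - msmin m x x t) + (m y y t - msmin m y y t) + (m z z t - msmin m z z t)

/-- `S` is a partial `S`-metric on `X`. -/
structure IsPartialSMetric {X : Type*} (S : X → X → X → ℝ) : Prop where
  nonneg : ∀ x y z, 0 ≤ S x y z
  eq_iff : ∀ x y, (S x x x = S y y y ∧ S y y y = S x x y) ↔ x = y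
  triangle : ∀ x y z t, S x y z ≤ S x x t + S y y t + S z z t - S t t t
  self_le : ∀ x y z, S x x x ≤ S x y z
  symm : ∀ x y, S x x y = S y y x

/-- The self value: `exSelf i` is `mₛ(i,i,i)`, where `0,1,2` play the roles of `1,2,3`. -/
def exSelf : Fin 3 → ℝ
  | 0 => 8
  | 1 => 9
  | 2 => 5

/-- The value on a pair of distinct points `{a, b}`:
`mₛ(1,1,2) = 8`, `mₛ(1,1,3) = 7`, `mₛ(2,2,3) = 7` (with `0,1,2` playing the roles of `1,2,3`). -/
def exPair (a b : Fin 3) : ℝ :=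
  if (a = 0 ∧ b = 1) ∨ (a = 1 ∧ b = 0) then 8 else 7

/-- The symmetric function on `{1,2,3}³` (here `Fin 3`, with `0,1,2` playing the roles of
`1,2,3`) determined by `mₛ(1,2,3) = 6`, `mₛ(1,1,2) = mₛ(1,1,1) = 8`,
`mₛ(1,1,3) = mₛ(2,2,3) = 7`, `mₛ(2,2,2) = 9`, `mₛ(3,3,3) = 5`. -/
def exMs (x y z : Fin 3) : ℝ :=
  if x = y then (if y = z then exSelf x else exPair x z)
  else if y = z then exPair y x
  else if x = z then exPair x y
  else 6

/-- `exMs` is an Mₛ-metric which is not a partial S-metric; indeed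
`mₛ(1,1,1) > mₛ(1,2,3)`, violating axiom (iii) of a partial S-metric. -/
theorem exMs_isMsMetric_not_partialSMetric :
    IsMsMetric exMs ∧ exMs 0 0 0 > exMs 0 1 2 ∧ ¬ IsPartialSMetric exMs := by
  have hself : ∀ i : Fin 3, exMs i i i = exSelf i := by
    intro i; simp [exMs]
  refine ⟨⟨?_, ?_, ?_, ?_, ?_⟩, ?_, ?_⟩
  · intro x y z; fin_cases x <;> fin_cases y <;> fin_cases z <;>
      norm_num [exMs, exSelf, exPair, Fin.ext_iff]
  · intro x y; fin_cases x <;> fin_cases y <;>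
      norm_num [exMs, exSelf, exPair, Fin.ext_iff]
  · intro x y z; fin_cases x <;> fin_cases y <;> fin_cases z <;>
      norm_num [msmin, exMs, exSelf, exPair, Fin.ext_iff]
  · intro x y; fin_cases x <;> fin_cases y <;>
      norm_num [exMs, exSelf, exPair, Fin.ext_iff]
  · intro x y z t; fin_cases x <;> fin_cases y <;> fin_cases z <;> fin_cases t <;>
      norm_num [msmin, exMs, exSelf, exPair, Fin.ext_iff]
  · norm_num [exMs, exSelf, exPair, Fin.ext_iff]
  · intro h
    have := h.self_le 0 1 2
    norm_num [exMs, exSelf, exPair, Fin.ext_iff] at this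
end

section
/- Let (X, m_s) be an M_s-metric space. Then for all x, y, x', y' ∈ X, |(m_s(x,x,y) − m_{s,x,x,y}) − (m_s(x',x',y') − m_{s,x',x',y'})| ≤ 2[(m_s(x,x,x') − m_{s,x,x,x'}) + (m_s(y,y,y') − m_{s,y,y,y'})]. -/
open Filter Topology

/-- The key estimate behind Lemma 1. -/
theorem abs_sub_msdist_le {X : Type*} (m : X → X → X → ℝ) (hm : IsMsMetric m)
    (x y x' y' : X) :
    |(m x x y - msmin m x x y) - (m x' x' y' - msmin m x' x' y')| ≤
      2 * ((m x x x' - msmin m x x x') + (m y y y' - msmin m y y y')) := by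
  have key : ∀ a b : X, msmin m a a b = min (m a a a) (m b b b) := by
    intro a b
    simp [msmin, ← min_assoc]
  have msymm : ∀ a b : X, msmin m a a b = msmin m b b a := by
    intro a b; rw [key, key, min_comm]
  have h1 := hm.ineq x x y x'
  have h2 := hm.ineq y y x' y'
  have h3 := hm.ineq x' x' y' x
  have h4 := hm.ineq y' y' x y
  have e1 : m y y x' = m x' x' y := hm.symm y x'
  have e2 : msmin m y y x' = msmin m x' x' y := msymm y x'
  have e3 : m x' x' x = m x x x' := hm.symm x' x
  have e4 : msmin m x' x' x = msmin m x x x' := msymm x' x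
  have e5 : m y' y' y = m y y y' := hm.symm y' y
  have e6 : msmin m y' y' y = msmin m y y y' := msymm y' y
  have e7 : m y' y' x = m x x y' := hm.symm y' x
  have e8 : msmin m y' y' x = msmin m x x y' := msymm y' x
  have e9 : m x' x' y = m y y x' := hm.symm x' y
  have e10 : m x x y' = m y' y' x := hm.symm x y'
  rw [abs_sub_le_iff]
  constructor <;> linarith
end

section
/- Let (X, m_s) be an M_s-metric space and let {x_n}, {y_n} be sequences in X with x_n → x and y_n → y as n → ∞ (in the M_s sense). Then lim_{n→∞} (m_s(x_n,x_n,y_n) − m_{s,x_n,x_n,y_n}) = m_s(x,x,y) − m_{s,x,x,y}. -/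
open Filter Topology

/-- A sequence `x` converges to `a` in the `Mₛ`-metric sense. -/
def MsConvergesTo {X : Type*} (m : X → X → X → ℝ) (x : ℕ → X) (a : X) : Prop :=
  Tendsto (fun n => m (x n) (x n) a - msmin m (x n) (x n) a) atTop (nhds 0)

/-- A sequence `x` is `Mₛ`-Cauchy: the two double limits exist (and are finite). -/
def MsCauchy {X : Type*} (m : X → X → X → ℝ) (x : ℕ → X) : Prop :=
  (∃ L : ℝ, Tendsto
      (fun p : ℕ × ℕ => m (x p.1) (x p.1) (x p.2) - msmin m (x p.1) (x p.1) (x p.2))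
      atTop (nhds L)) ∧
  (∃ L : ℝ, Tendsto
      (fun p : ℕ × ℕ => msmax m (x p.1) (x p.1) (x p.2) - msmin m (x p.1) (x p.1) (x p.2))
      atTop (nhds L))

/-- The `Mₛ`-metric space `(X, m)` is complete. -/
def MsComplete {X : Type*} (m : X → X → X → ℝ) : Prop :=
  ∀ x : ℕ → X, MsCauchy m x → ∃ a : X,
    Tendsto (fun n => m (x n) (x n) a - msmin m (x n) (x n) a) atTop (nhds 0) ∧
    Tendsto (fun n => msmax m (x n) (x n) a - msmin m (x n) (x n) a) atTop (nhds 0)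

/-- Lemma 1: if `xₙ → x` and `yₙ → y` in an Mₛ-metric space, then
`mₛ(xₙ,xₙ,yₙ) − mₛ_{xₙ,xₙ,yₙ} → mₛ(x,x,y) − mₛ_{x,x,y}`. -/
theorem tendsto_msdist_of_msConvergesTo {X : Type*} (m : X → X → X → ℝ)
    (hm : IsMsMetric m) (x y : ℕ → X) (a b : X)
    (hx : MsConvergesTo m x a) (hy : MsConvergesTo m y b) :
    Tendsto (fun n => m (x n) (x n) (y n) - msmin m (x n) (x n) (y n)) atTop
      (nhds (m a a b - msmin m a a b)) := by
  -- abbreviation for the "distance" quantity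
  set d : X → X → X → ℝ := fun u v w => m u v w - msmin m u v w with hd
  have hpair : ∀ u v : X, msmin m u u v = min (m u u u) (m v v v) := by
    intro u v; simp [msmin, ← min_assoc]
  have hdsymm : ∀ u v : X, d u u v = d v v u := by
    intro u v; simp only [hd, hm.symm u v, hpair, min_comm]
  have hdnonneg : ∀ u v w : X, 0 ≤ d u v w := by
    intro u v w; simp only [hd, sub_nonneg]; exact hm.min_le u v w
  have hineq : ∀ u v w t : X, d u v w ≤ d u u t + d v v t + d w w t := by
    intro u v w t; exact hm.ineq u v w t
  have key : ∀ n, ‖d (x n) (x n) (y n) - d a a b‖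
      ≤ 2 * d (x n) (x n) a + 2 * d (y n) (y n) b := by
    intro n
    have h1 : d (x n) (x n) (y n) ≤ 2 * d (x n) (x n) a + d (y n) (y n) a := by
      have := hineq (x n) (x n) (y n) a
      linarith
    have h2 : d (y n) (y n) a ≤ 2 * d (y n) (y n) b + d a a b := by
      have := hineq (y n) (y n) a b
      linarith
    have h3 : d a a b ≤ 2 * d a a (x n) + d b b (x n) := by
      have := hineq a a b (x n)
      linarith
    have h4 : d b b (x n) ≤ 2 * d b b (y n) + d (x n) (x n) (y n) := by
      have := hineq b b (x n) (y n)
      have h5 := hdsymm (x n) (y n)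
      linarith
    have e1 := hdsymm a (x n)
    have e2 := hdsymm b (y n)
    rw [Real.norm_eq_abs, abs_le]
    constructor <;> [skip; skip] <;> linarith
  have hlim : Tendsto (fun n => 2 * d (x n) (x n) a + 2 * d (y n) (y n) b)
      atTop (nhds 0) := by
    have := (hx.const_mul 2).add (hy.const_mul 2)
    simpa using this
  have := squeeze_zero_norm key hlim
  have h := this.add_const (d a a b)
  simpa using h
end

section
/- Let (X, m_s) be a complete M_s-metric space and T : X → X a self mapping such that m_s(Tx, Tx, Ty) ≤ k·m_s(x,x,y) for all x, y ∈ X, where k ∈ [0,1). Then T has a unique fixed point u ∈ X, and moreover m_s(u,u,u) = 0. -/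
open Filter Topology

/-- Theorem 1 (Banach-type contraction in a complete Mₛ-metric space). -/
theorem fixedPoint_of_contraction {X : Type*} [Nonempty X] (m : X → X → X → ℝ)
    (hm : IsMsMetric m) (hcomp : MsComplete m) (T : X → X) (k : ℝ)
    (hk0 : 0 ≤ k) (hk1 : k < 1)
    (hT : ∀ x y, m (T x) (T x) (T y) ≤ k * m x x y) :
    ∃ u : X, T u = u ∧ m u u u = 0 ∧ ∀ v : X, T v = v → v = u := by

  obtain ⟨x0⟩ := (inferInstance : Nonempty X)
  set f : ℕ → X := fun n => T^[n] x0 with hf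
  have hfs : ∀ n, f (n+1) = T (f n) := fun n => Function.iterate_succ_apply' T n x0
  have hnn := hm.nonneg
  have hmin_nonneg : ∀ x y z, 0 ≤ msmin m x y z := fun x y z =>
    le_min (hnn _ _ _) (le_min (hnn _ _ _) (hnn _ _ _))
  have hdnn : ∀ x y z, 0 ≤ m x y z - msmin m x y z := fun x y z =>
    sub_nonneg.2 (hm.min_le x y z)
  have hminsymm : ∀ x y : X, msmin m x x y = msmin m y y x := by
    intro x y
    simp only [msmin, ← min_assoc, min_self]
    exact min_comm _ _
  have h1k : (0:ℝ) < 1 - k := by linarith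
  set D := m (f 0) (f 0) (f 1) with hD
  have hD0 : 0 ≤ D := hnn _ _ _
  set s : ℕ → ℝ := fun n => m (f n) (f n) (f n) with hs
  have hs0 : ∀ n, 0 ≤ s n := fun n => hnn _ _ _
  have hstep : ∀ n, m (f n) (f n) (f (n+1)) ≤ k ^ n * D := by
    intro n; induction n with
    | zero => simp [hD]
    | succ n ih =>
      rw [hfs n, hfs (n+1)]
      calc m (T (f n)) (T (f n)) (T (f (n+1))) ≤ k * m (f n) (f n) (f (n+1)) := hT _ _
        _ ≤ k * (k ^ n * D) := mul_le_mul_of_nonneg_left ih hk0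
        _ = k ^ (n+1) * D := by ring
  have hself : ∀ n, s n ≤ k ^ n * s 0 := by
    intro n; induction n with
    | zero => simp
    | succ n ih =>
      show m (f (n+1)) (f (n+1)) (f (n+1)) ≤ _
      rw [hfs n]
      calc m (T (f n)) (T (f n)) (T (f n)) ≤ k * m (f n) (f n) (f n) := hT _ _
        _ ≤ k * (k ^ n * s 0) := mul_le_mul_of_nonneg_left ih hk0
        _ = k ^ (n+1) * s 0 := by ring
  -- key chain estimate
  have hchain : ∀ d p, m (f p) (f p) (f (p+d)) - msmin m (f p) (f p) (f (p+d))
      ≤ 2 * k ^ p * D / (1-k) := by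
    intro d
    induction d with
    | zero =>
      intro p
      have : msmin m (f p) (f p) (f (p+0)) = m (f p) (f p) (f (p+0)) := by
        simp [msmin]
      rw [this]
      have : (0:ℝ) ≤ 2 * k ^ p * D / (1-k) :=
        div_nonneg (by positivity) (le_of_lt h1k)
      linarith
    | succ d ih =>
      intro p
      have h4 := hm.ineq (f p) (f p) (f (p+(d+1))) (f (p+1))
      have e1 : f (p+(d+1)) = f ((p+1)+d) := congrArg f (by omega)
      have hsym3 : m (f (p+(d+1))) (f (p+(d+1))) (f (p+1))
          = m (f (p+1)) (f (p+1)) (f (p+(d+1))) := hm.symm _ _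
      have hmsym3 : msmin m (f (p+(d+1))) (f (p+(d+1))) (f (p+1))
          = msmin m (f (p+1)) (f (p+1)) (f (p+(d+1))) := hminsymm _ _
      have hb1 : m (f p) (f p) (f (p+1)) - msmin m (f p) (f p) (f (p+1)) ≤ k ^ p * D := by
        have := hmin_nonneg (f p) (f p) (f (p+1))
        have := hstep p
        linarith
      have hb2 : m (f (p+1)) (f (p+1)) (f (p+(d+1)))
          - msmin m (f (p+1)) (f (p+1)) (f (p+(d+1))) ≤ 2 * k ^ (p+1) * D / (1-k) := by
        rw [e1]; exact ih (p+1)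
      rw [hsym3, hmsym3] at h4
      have key : 2 * (k ^ p * D) + 2 * k ^ (p+1) * D / (1-k) = 2 * k ^ p * D / (1-k) := by
        field_simp
        ring
      linarith
  -- general Cauchy estimate
  have hgen : ∀ n q : ℕ, m (f n) (f n) (f q) - msmin m (f n) (f n) (f q)
      ≤ 2 * (k ^ n + k ^ q) * D / (1-k) := by
    have aux : ∀ n q : ℕ, n ≤ q → m (f n) (f n) (f q) - msmin m (f n) (f n) (f q)
        ≤ 2 * (k ^ n + k ^ q) * D / (1-k) := by
      intro n q hle
      obtain ⟨d, rfl⟩ := Nat.exists_eq_add_of_le hle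
      calc m (f n) (f n) (f (n+d)) - msmin m (f n) (f n) (f (n+d))
          ≤ 2 * k ^ n * D / (1-k) := hchain d n
        _ ≤ 2 * (k ^ n + k ^ (n+d)) * D / (1-k) := by
            have hq : (0:ℝ) ≤ k ^ (n+d) := pow_nonneg hk0 _
            gcongr
            linarith
    intro n q
    rcases le_total n q with h | h
    · exact aux n q h
    · rw [hm.symm, hminsymm]
      calc m (f q) (f q) (f n) - msmin m (f q) (f q) (f n)
          ≤ 2 * (k ^ q + k ^ n) * D / (1-k) := aux q n h
        _ = 2 * (k ^ n + k ^ q) * D / (1-k) := by ring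
  -- geometric tendsto facts
  have hkpow : Tendsto (fun n : ℕ => k ^ n) atTop (nhds 0) :=
    tendsto_pow_atTop_nhds_zero_of_lt_one hk0 hk1
  have hpf : Tendsto (Prod.fst : ℕ × ℕ → ℕ) atTop atTop := by
    rw [← prod_atTop_atTop_eq]; exact tendsto_fst
  have hps : Tendsto (Prod.snd : ℕ × ℕ → ℕ) atTop atTop := by
    rw [← prod_atTop_atTop_eq]; exact tendsto_snd
  -- Cauchy, first limit
  have tA : Tendsto (fun p : ℕ × ℕ =>
      m (f p.1) (f p.1) (f p.2) - msmin m (f p.1) (f p.1) (f p.2)) atTop (nhds 0) := by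
    apply squeeze_zero (fun p => hdnn _ _ _) (fun p => hgen p.1 p.2)
    have : Tendsto (fun p : ℕ × ℕ => 2 * (k ^ p.1 + k ^ p.2) * D / (1-k)) atTop
        (nhds (2 * ((0:ℝ) + 0) * D / (1-k))) :=
      ((((hkpow.comp hpf).add (hkpow.comp hps)).const_mul 2).mul_const D).div_const (1-k)
    simpa using this
  -- Cauchy, second limit
  have hBle : ∀ p : ℕ × ℕ, msmax m (f p.1) (f p.1) (f p.2)
      - msmin m (f p.1) (f p.1) (f p.2) ≤ k ^ p.1 * s 0 + k ^ p.2 * s 0 := by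
    intro p
    have h1 : msmax m (f p.1) (f p.1) (f p.2) ≤ s p.1 + s p.2 := by
      apply max_le (le_add_of_nonneg_right (hs0 p.2))
      exact max_le (le_add_of_nonneg_right (hs0 p.2)) (le_add_of_nonneg_left (hs0 p.1))
    have h2 := hmin_nonneg (f p.1) (f p.1) (f p.2)
    have h3 := hself p.1
    have h4 := hself p.2
    linarith
  have hBnn : ∀ p : ℕ × ℕ, 0 ≤ msmax m (f p.1) (f p.1) (f p.2)
      - msmin m (f p.1) (f p.1) (f p.2) := by
    intro p
    have : msmin m (f p.1) (f p.1) (f p.2) ≤ msmax m (f p.1) (f p.1) (f p.2) :=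
      le_trans (min_le_left _ _) (le_max_left _ _)
    linarith
  have tB : Tendsto (fun p : ℕ × ℕ =>
      msmax m (f p.1) (f p.1) (f p.2) - msmin m (f p.1) (f p.1) (f p.2)) atTop (nhds 0) := by
    apply squeeze_zero hBnn hBle
    have : Tendsto (fun p : ℕ × ℕ => k ^ p.1 * s 0 + k ^ p.2 * s 0) atTop
        (nhds ((0:ℝ) * s 0 + 0 * s 0)) :=
      ((hkpow.comp hpf).mul_const (s 0)).add ((hkpow.comp hps).mul_const (s 0))
    simpa using this
  obtain ⟨a, ha1, ha2⟩ := hcomp f ⟨⟨0, tA⟩, ⟨0, tB⟩⟩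
  have hA0 : 0 ≤ m a a a := hnn _ _ _
  have hstend : Tendsto s atTop (nhds 0) := by
    apply squeeze_zero hs0 hself
    simpa using hkpow.mul_const (s 0)
  -- m a a a = 0
  have haA : m a a a = 0 := by
    have ha2' : Tendsto (fun n => max (m (f n) (f n) (f n)) (max (m (f n) (f n) (f n)) (m a a a))
        - min (m (f n) (f n) (f n)) (min (m (f n) (f n) (f n)) (m a a a))) atTop
        (nhds (max 0 (max 0 (m a a a)) - min 0 (min 0 (m a a a)))) :=
      (hstend.max (hstend.max tendsto_const_nhds)).sub
        (hstend.min (hstend.min tendsto_const_nhds))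
    simp only [msmax, msmin] at ha2
    have h := tendsto_nhds_unique ha2' ha2
    simpa [max_eq_right hA0, min_eq_left hA0] using h
  -- convergence of m (f n) (f n) a to 0
  have hmineq : ∀ n, msmin m (f n) (f n) a = 0 := by
    intro n
    simp [msmin, haA, min_eq_right (hs0 n), min_eq_right (hs0 n)]
    exact hnn _ _ _
  have hga : Tendsto (fun n => m (f n) (f n) a) atTop (nhds 0) :=
    ha1.congr fun n => by rw [hmineq n, sub_zero]
  -- T a = a
  have hTaself : m (T a) (T a) (T a) = 0 := by
    have := hT a a
    rw [haA] at this
    have := hnn (T a) (T a) (T a)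
    linarith [hT a a, haA ▸ (hT a a)]
  have hbound : ∀ n, m (T a) (T a) a ≤ 2 * (k * m (f n) (f n) a) + m (f (n+1)) (f (n+1)) a := by
    intro n
    have h4 := hm.ineq (T a) (T a) a (f (n+1))
    have hc1 : m (T a) (T a) (f (n+1)) ≤ k * m (f n) (f n) a := by
      rw [hfs n]
      calc m (T a) (T a) (T (f n)) ≤ k * m a a (f n) := hT _ _
        _ = k * m (f n) (f n) a := by rw [hm.symm]
    have hc2 : m a a (f (n+1)) = m (f (n+1)) (f (n+1)) a := hm.symm _ _
    have hd1 := hmin_nonneg (T a) (T a) (f (n+1))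
    have hd2 := hmin_nonneg a a (f (n+1))
    have hd3 : msmin m (T a) (T a) a = 0 := by simp [msmin, hTaself, haA]
    linarith
  have hTaa : m (T a) (T a) a = 0 := by
    have htend : Tendsto (fun n => 2 * (k * m (f n) (f n) a) + m (f (n+1)) (f (n+1)) a)
        atTop (nhds (2 * (k * 0) + 0)) :=
      ((hga.const_mul k).const_mul 2).add (hga.comp (tendsto_add_atTop_nat 1))
    have h0 : m (T a) (T a) a ≤ 2 * (k * 0) + 0 := ge_of_tendsto' htend hbound
    have := hnn (T a) (T a) a
    linarith
  have hfix : T a = a := (hm.eq_iff (T a) a).mp ⟨by rw [hTaself, haA], by rw [haA, hTaa]⟩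
  refine ⟨a, hfix, haA, ?_⟩
  intro v hv
  have h1 := hT v a
  rw [hv, hfix] at h1
  have hva : m v v a = 0 := by nlinarith [hnn v v a]
  have h2 := hT v v
  rw [hv] at h2
  have hvv : m v v v = 0 := by nlinarith [hnn v v v]
  exact (hm.eq_iff v a).mp ⟨by rw [hvv, haA], by rw [haA, hva]⟩
end

section
/- Let (X, m_s) be an M_s-metric space and T : X → X a self mapping such that m_s(Tx, Tx, Ty) ≤ k·m_s(x,x,y) for all x, y ∈ X, where k ∈ [0,1). Fix x_0 ∈ X and define x_{n+1} = T x_n for all n ≥ 0. Then the Picard sequence {x_n} is M_s-Cauchy; in fact, m_s(x_n,x_n,x_m) − m_{s,x_n,x_n,x_m} → 0 and M_{s,x_n,x_n,x_m} − m_{s,x_n,x_n,x_m} → 0 as n, m → ∞. -/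
open Filter Topology

/-- The Picard sequence of a Banach-type contraction is Mₛ-Cauchy; in fact both double
limits are `0`. -/
theorem picard_msCauchy_of_contraction {X : Type*} (m : X → X → X → ℝ)
    (hm : IsMsMetric m) (T : X → X) (k : ℝ) (hk0 : 0 ≤ k) (hk1 : k < 1)
    (hT : ∀ x y, m (T x) (T x) (T y) ≤ k * m x x y) (x₀ : X) :
    MsCauchy m (fun n => T^[n] x₀) ∧
    Tendsto (fun p : ℕ × ℕ =>
        m (T^[p.1] x₀) (T^[p.1] x₀) (T^[p.2] x₀) -
          msmin m (T^[p.1] x₀) (T^[p.1] x₀) (T^[p.2] x₀)) atTop (nhds 0) ∧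
    Tendsto (fun p : ℕ × ℕ =>
        msmax m (T^[p.1] x₀) (T^[p.1] x₀) (T^[p.2] x₀) -
          msmin m (T^[p.1] x₀) (T^[p.1] x₀) (T^[p.2] x₀)) atTop (nhds 0) := by
  set x : ℕ → X := fun n => T^[n] x₀ with hx
  have hx1 : ∀ n, x (n + 1) = T (x n) := fun n => Function.iterate_succ_apply' T n x₀
  have hx0 : x 0 = x₀ := rfl
  set s0 : ℝ := m x₀ x₀ x₀ with hs0def
  set a0 : ℝ := m x₀ x₀ (T x₀) with ha0def
  have hk1' : 0 < 1 - k := by linarith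
  set C : ℝ := s0 + (s0 + 2 * a0) / (1 - k) with hC
  have hs0 : 0 ≤ s0 := hm.nonneg _ _ _
  have ha0 : 0 ≤ a0 := hm.nonneg _ _ _
  have hdiv : 0 ≤ (s0 + 2 * a0) / (1 - k) := div_nonneg (by linarith) hk1'.le
  have hs0C : s0 ≤ C := by rw [hC]; linarith
  have hC0 : 0 ≤ C := le_trans hs0 hs0C
  -- self-distances decay
  have hs : ∀ n, m (x n) (x n) (x n) ≤ k ^ n * s0 := by
    intro n
    induction n with
    | zero => simp [hx0]; exact le_rfl
    | succ n ih =>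
      rw [hx1, pow_succ]
      calc m (T (x n)) (T (x n)) (T (x n)) ≤ k * m (x n) (x n) (x n) := hT _ _
        _ ≤ k * (k ^ n * s0) := mul_le_mul_of_nonneg_left ih hk0
        _ = k ^ n * k * s0 := by ring
  have ha : ∀ n, m (x n) (x n) (x (n + 1)) ≤ k ^ n * a0 := by
    intro n
    induction n with
    | zero => simp [hx0, hx1 0]; exact le_rfl
    | succ n ih =>
      rw [hx1, hx1, pow_succ]
      calc m (T (x n)) (T (x n)) (T (x (n + 1))) ≤ k * m (x n) (x n) (x (n + 1)) := hT _ _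
        _ ≤ k * (k ^ n * a0) := mul_le_mul_of_nonneg_left ih hk0
        _ = k ^ n * k * a0 := by ring
  have hmin_nonneg : ∀ a b c : X, 0 ≤ msmin m a b c := fun a b c =>
    le_min (hm.nonneg _ _ _) (le_min (hm.nonneg _ _ _) (hm.nonneg _ _ _))
  have hmin_le_self : ∀ a b c : X, msmin m a b c ≤ m a a a := fun a b c => min_le_left _ _
  have hCk : s0 + 2 * a0 + C * k ≤ C := by
    have hcancel : (s0 + 2 * a0) / (1 - k) * (1 - k) = s0 + 2 * a0 :=
      div_mul_cancel₀ _ hk1'.ne'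
    rw [hC]
    nlinarith [hcancel, mul_nonneg hs0 (sub_nonneg.2 hk1.le)]
  -- key bound
  have hmain : ∀ d n, m (x n) (x n) (x (n + d)) ≤ C * k ^ n := by
    intro d
    induction d with
    | zero =>
      intro n
      have := hs n
      have hkn : 0 ≤ k ^ n := pow_nonneg hk0 n
      calc m (x n) (x n) (x (n + 0)) = m (x n) (x n) (x n) := by norm_num
        _ ≤ k ^ n * s0 := hs n
        _ ≤ k ^ n * C := mul_le_mul_of_nonneg_left hs0C hkn
        _ = C * k ^ n := by ring
    | succ d ih =>
      intro n
      have h4 := hm.ineq (x n) (x n) (x (n + (d + 1))) (x (n + 1))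
      have hsym : m (x (n + (d + 1))) (x (n + (d + 1))) (x (n + 1)) =
          m (x (n + 1)) (x (n + 1)) (x (n + (d + 1))) := hm.symm _ _
      have hih : m (x (n + 1)) (x (n + 1)) (x ((n + 1) + d)) ≤ C * k ^ (n + 1) := ih (n + 1)
      have heq : (n + 1) + d = n + (d + 1) := by omega
      rw [heq] at hih
      have h1 := hmin_nonneg (x n) (x n) (x (n + 1))
      have h2 := hmin_nonneg (x (n + (d + 1))) (x (n + (d + 1))) (x (n + 1))
      have h3 : msmin m (x n) (x n) (x (n + (d + 1))) ≤ k ^ n * s0 :=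
        le_trans (hmin_le_self _ _ _) (hs n)
      have ha' := ha n
      have hkn : 0 ≤ k ^ n := pow_nonneg hk0 n
      have hfin : k ^ n * s0 + 2 * (k ^ n * a0) + C * k ^ (n + 1) ≤ C * k ^ n := by
        have := mul_le_mul_of_nonneg_left hCk hkn
        calc k ^ n * s0 + 2 * (k ^ n * a0) + C * k ^ (n + 1)
            = k ^ n * (s0 + 2 * a0 + C * k) := by ring
          _ ≤ k ^ n * C := mul_le_mul_of_nonneg_left hCk hkn
          _ = C * k ^ n := by ring
      have hrhs := hih
      rw [hsym] at h4
      linarith [h4]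
  have hfull : ∀ n n', m (x n) (x n) (x n') ≤ C * k ^ (min n n') := by
    intro n n'
    rcases le_total n n' with h | h
    · rw [min_eq_left h]
      have := hmain (n' - n) n
      rwa [Nat.add_sub_cancel' h] at this
    · rw [min_eq_right h, hm.symm]
      have := hmain (n - n') n'
      rwa [Nat.add_sub_cancel' h] at this
  -- tendsto of the geometric bound
  have hmin_tendsto : Tendsto (fun p : ℕ × ℕ => min p.1 p.2) atTop atTop := by
    rw [tendsto_atTop]
    intro b
    filter_upwards [eventually_ge_atTop ((b, b) : ℕ × ℕ)] with p hp
    exact le_min hp.1 hp.2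
  have hgeo : Tendsto (fun p : ℕ × ℕ => C * k ^ (min p.1 p.2)) atTop (nhds 0) := by
    have hp0 : Tendsto (fun n : ℕ => k ^ n) atTop (nhds 0) :=
      tendsto_pow_atTop_nhds_zero_of_lt_one hk0 hk1
    have := (hp0.comp hmin_tendsto).const_mul C
    simpa using this
  have hD0 : ∀ n n', 0 ≤ m (x n) (x n) (x n') - msmin m (x n) (x n) (x n') :=
    fun n n' => sub_nonneg.2 (hm.min_le _ _ _)
  have hT1 : Tendsto (fun p : ℕ × ℕ =>
      m (x p.1) (x p.1) (x p.2) - msmin m (x p.1) (x p.1) (x p.2)) atTop (nhds 0) := by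
    apply squeeze_zero (fun p => hD0 p.1 p.2) _ hgeo
    intro p
    have h1 := hfull p.1 p.2
    have h2 := hmin_nonneg (x p.1) (x p.1) (x p.2)
    linarith
  have hmaxle : ∀ n n', msmax m (x n) (x n) (x n') ≤ C * k ^ (min n n') := by
    intro n n'
    have hb : ∀ j, min n n' ≤ j → m (x j) (x j) (x j) ≤ C * k ^ (min n n') := by
      intro j hj
      have h1 := hs j
      have h2 : k ^ j ≤ k ^ (min n n') := pow_le_pow_of_le_one hk0 hk1.le hj
      have h3 : k ^ j * s0 ≤ k ^ (min n n') * C :=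
        mul_le_mul h2 hs0C hs0 (pow_nonneg hk0 _)
      calc m (x j) (x j) (x j) ≤ k ^ j * s0 := h1
        _ ≤ k ^ (min n n') * C := h3
        _ = C * k ^ (min n n') := by ring
    exact max_le (hb n (min_le_left _ _))
      (max_le (hb n (min_le_left _ _)) (hb n' (min_le_right _ _)))
  have hM0 : ∀ n n', 0 ≤ msmax m (x n) (x n) (x n') - msmin m (x n) (x n) (x n') := by
    intro n n'
    have : msmin m (x n) (x n) (x n') ≤ msmax m (x n) (x n) (x n') :=
      le_trans (min_le_left _ _) (le_max_left _ _)
    linarith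
  have hT2 : Tendsto (fun p : ℕ × ℕ =>
      msmax m (x p.1) (x p.1) (x p.2) - msmin m (x p.1) (x p.1) (x p.2)) atTop (nhds 0) := by
    apply squeeze_zero (fun p => hM0 p.1 p.2) _ hgeo
    intro p
    have h1 := hmaxle p.1 p.2
    have h2 := hmin_nonneg (x p.1) (x p.1) (x p.2)
    linarith
  exact ⟨⟨⟨0, hT1⟩, ⟨0, hT2⟩⟩, hT1, hT2⟩
end

section
/- Let (X, m_s) be a complete M_s-metric space and T : X → X a self mapping such that m_s(Tx, Tx, Ty) ≤ λ[m_s(x,x,Tx) + m_s(y,y,Ty)] for all x, y ∈ X, where λ ∈ [0,1/2). Then T has a unique fixed point u ∈ X, and m_s(u,u,u) = 0. -/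
open Filter Topology

/-- Theorem 2 (Kannan-type contraction in a complete Mₛ-metric space). -/
theorem fixedPoint_of_kannanContraction {X : Type*} [Nonempty X] (m : X → X → X → ℝ)
    (hm : IsMsMetric m) (hcomp : MsComplete m) (T : X → X) (lam : ℝ)
    (hl0 : 0 ≤ lam) (hl1 : lam < 1 / 2)
    (hT : ∀ x y, m (T x) (T x) (T y) ≤ lam * (m x x (T x) + m y y (T y))) :
    ∃ u : X, T u = u ∧ m u u u = 0 ∧ ∀ v : X, T v = v → v = u := by
  obtain ⟨x0⟩ := ‹Nonempty X›
  set x : ℕ → X := fun n => T^[n] x0 with hx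
  have hxs : ∀ n, x (n + 1) = T (x n) := fun n => Function.iterate_succ_apply' T n x0
  set d : ℕ → ℝ := fun n => m (x n) (x n) (x (n + 1)) with hd
  have h1lam : (0:ℝ) < 1 - lam := by linarith
  set k : ℝ := lam / (1 - lam) with hk
  have hk0 : 0 ≤ k := div_nonneg hl0 h1lam.le
  have hk1 : k < 1 := by rw [hk, div_lt_one h1lam]; linarith
  have hmin_nonneg : ∀ a b c : X, 0 ≤ msmin m a b c := fun a b c =>
    le_min (hm.nonneg _ _ _) (le_min (hm.nonneg _ _ _) (hm.nonneg _ _ _))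
  -- basic contraction estimate on iterates
  have hTT : ∀ n mm : ℕ, m (x (n + 1)) (x (n + 1)) (x (mm + 1)) ≤ lam * (d n + d mm) := by
    intro n mm
    have h := hT (x n) (x mm)
    rw [← hxs n, ← hxs mm] at h
    simpa [hd] using h
  have hdrec : ∀ n, d (n + 1) ≤ k * d n := by
    intro n
    have h := hTT n (n + 1)
    have hdn1 : d (n + 1) = m (x (n + 1)) (x (n + 1)) (x (n + 1 + 1)) := rfl
    rw [hk, div_mul_eq_mul_div, le_div_iff₀ h1lam, hdn1]
    rw [hdn1] at h
    nlinarith [h]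
  have hdn : ∀ n, d n ≤ k ^ n * d 0 := by
    intro n
    induction n with
    | zero => simp
    | succ n ih =>
      calc d (n + 1) ≤ k * d n := hdrec n
        _ ≤ k * (k ^ n * d 0) := mul_le_mul_of_nonneg_left ih hk0
        _ = k ^ (n + 1) * d 0 := by ring
  have hdpos : ∀ n, 0 ≤ d n := fun n => hm.nonneg _ _ _
  have hd0 : Tendsto d atTop (nhds 0) := by
    have hg : Tendsto (fun n : ℕ => k ^ n * d 0) atTop (nhds 0) := by
      simpa using (tendsto_pow_atTop_nhds_zero_of_lt_one hk0 hk1).mul_const (d 0)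
    exact squeeze_zero hdpos hdn hg
  -- `a n := m (x n) (x n) (x n)` tends to 0
  have ha : Tendsto (fun n => m (x n) (x n) (x n)) atTop (nhds 0) := by
    rw [← tendsto_add_atTop_iff_nat 1]
    refine squeeze_zero (fun n => hm.nonneg _ _ _) (fun n => ?_)
      (by simpa using hd0.const_mul (2 * lam))
    have h := hTT n n
    linarith
  -- auxiliary tendsto facts on ℕ × ℕ
  have hfst : Tendsto (Prod.fst : ℕ × ℕ → ℕ) atTop atTop := by
    rw [← Filter.prod_atTop_atTop_eq]; exact Filter.tendsto_fst
  have hsnd : Tendsto (Prod.snd : ℕ × ℕ → ℕ) atTop atTop := by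
    rw [← Filter.prod_atTop_atTop_eq]; exact Filter.tendsto_snd
  -- the sequence is Cauchy
  have hC1 : Tendsto
      (fun p : ℕ × ℕ => m (x p.1) (x p.1) (x p.2) - msmin m (x p.1) (x p.1) (x p.2))
      atTop (nhds 0) := by
    have hsub : Tendsto (fun n : ℕ => d (n - 1)) atTop (nhds 0) :=
      hd0.comp (tendsto_sub_atTop_nat 1)
    have hg : Tendsto (fun p : ℕ × ℕ => lam * (d (p.1 - 1) + d (p.2 - 1))) atTop (nhds 0) := by
      simpa using ((hsub.comp hfst).add (hsub.comp hsnd)).const_mul lam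
    refine squeeze_zero' (Eventually.of_forall fun p => sub_nonneg.mpr (hm.min_le _ _ _)) ?_ hg
    filter_upwards [eventually_ge_atTop ((1, 1) : ℕ × ℕ)] with p hp
    obtain ⟨i, j⟩ := p
    obtain ⟨hi, hj⟩ := hp
    obtain ⟨n, rfl⟩ : ∃ n, i = n + 1 := ⟨i - 1, by omega⟩
    obtain ⟨mm, rfl⟩ : ∃ mm, j = mm + 1 := ⟨j - 1, by omega⟩
    have h := hTT n mm
    have h0 := hmin_nonneg (x (n + 1)) (x (n + 1)) (x (mm + 1))
    simp only [Nat.add_sub_cancel]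
    linarith
  have hC2 : Tendsto
      (fun p : ℕ × ℕ => msmax m (x p.1) (x p.1) (x p.2) - msmin m (x p.1) (x p.1) (x p.2))
      atTop (nhds 0) := by
    have hg : Tendsto (fun p : ℕ × ℕ => m (x p.1) (x p.1) (x p.1) + m (x p.2) (x p.2) (x p.2))
        atTop (nhds 0) := by
      simpa using (ha.comp hfst).add (ha.comp hsnd)
    refine squeeze_zero' (Eventually.of_forall fun p => ?_)
      (Eventually.of_forall fun p => ?_) hg
    · have : msmin m (x p.1) (x p.1) (x p.2) ≤ msmax m (x p.1) (x p.1) (x p.2) :=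
        le_trans (min_le_left _ _) (le_max_left _ _)
      linarith
    · have h1 : msmax m (x p.1) (x p.1) (x p.2) ≤
          m (x p.1) (x p.1) (x p.1) + m (x p.2) (x p.2) (x p.2) := by
        refine max_le (by linarith [hm.nonneg (x p.2) (x p.2) (x p.2)]) (max_le ?_ ?_)
        · linarith [hm.nonneg (x p.2) (x p.2) (x p.2)]
        · linarith [hm.nonneg (x p.1) (x p.1) (x p.1)]
      have h0 := hmin_nonneg (x p.1) (x p.1) (x p.2)
      linarith
  obtain ⟨u, hu1, hu2⟩ := hcomp x ⟨⟨0, hC1⟩, ⟨0, hC2⟩⟩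
  -- limits with respect to u
  have hminu : Tendsto (fun n => msmin m (x n) (x n) u) atTop (nhds 0) :=
    squeeze_zero (fun n => hmin_nonneg _ _ _) (fun n => min_le_left _ _) ha
  have hconv : Tendsto (fun n => m (x n) (x n) u) atTop (nhds 0) := by
    simpa using hu1.add hminu
  have hmaxu : Tendsto (fun n => msmax m (x n) (x n) u) atTop (nhds 0) := by
    simpa using hu2.add hminu
  have huuu : m u u u = 0 := by
    have hle : m u u u ≤ 0 :=
      ge_of_tendsto' hmaxu fun n => le_max_of_le_right (le_max_right _ _)
    exact le_antisymm hle (hm.nonneg u u u)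
  -- show m u u (T u) = 0
  have hb : Tendsto (fun n => m (x (n + 1)) (x (n + 1)) u) atTop (nhds 0) :=
    hconv.comp (tendsto_add_atTop_nat 1)
  have key : ∀ n, m u u (T u) - lam * m u u (T u) ≤
      2 * m (x (n + 1)) (x (n + 1)) u + lam * d n := by
    intro n
    have hineq := hm.ineq u u (T u) (x (n + 1))
    have h1 : msmin m u u (T u) ≤ 0 := by
      rw [← huuu]; exact min_le_left _ _
    have h2 : 0 ≤ msmin m u u (x (n + 1)) := hmin_nonneg _ _ _
    have h3 : 0 ≤ msmin m (T u) (T u) (x (n + 1)) := hmin_nonneg _ _ _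
    have h4 : m u u (x (n + 1)) = m (x (n + 1)) (x (n + 1)) u := hm.symm _ _
    have h5 : m (T u) (T u) (x (n + 1)) ≤ lam * (d n + m u u (T u)) := by
      rw [hm.symm (T u) (x (n + 1)), hxs n]
      have hdn' : d n = m (x n) (x n) (T (x n)) := by
        rw [show d n = m (x n) (x n) (x (n + 1)) from rfl, hxs n]
      rw [hdn']
      exact hT (x n) u
    linarith
  have hc : m u u (T u) = 0 := by
    have hzero : Tendsto (fun n => 2 * m (x (n + 1)) (x (n + 1)) u + lam * d n)
        atTop (nhds 0) := by
      simpa using (hb.const_mul 2).add (hd0.const_mul lam)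
    have hle : m u u (T u) - lam * m u u (T u) ≤ 0 := ge_of_tendsto' hzero key
    have h0 := hm.nonneg u u (T u)
    nlinarith
  have hTu : m (T u) (T u) (T u) = 0 := by
    have h := hT u u
    rw [hc] at h
    have h0 := hm.nonneg (T u) (T u) (T u)
    nlinarith
  have hfix : T u = u := by
    refine (hm.eq_iff (T u) u).mp ⟨by rw [hTu, huuu], ?_⟩
    rw [huuu, hm.symm (T u) u, hc]
  refine ⟨u, hfix, huuu, fun v hv => ?_⟩
  have hvvv : m v v v = 0 := by
    have h := hT v v
    rw [hv] at h
    have h0 := hm.nonneg v v v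
    nlinarith
  have hvvu : m v v u = 0 := by
    have h := hT v u
    rw [hv, hfix, hvvv, huuu] at h
    have h0 := hm.nonneg v v u
    nlinarith
  exact (hm.eq_iff v u).mp ⟨by rw [hvvv, huuu], by rw [huuu, hvvu]⟩
end

section
/- Let (X, m_s) be an M_s-metric space and T : X → X a self mapping such that m_s(Tx, Tx, Ty) ≤ λ[m_s(x,x,Tx) + m_s(y,y,Ty)] for all x, y ∈ X, where λ ∈ [0,1/2). Fix x_0 ∈ X, define x_{n+1} = T x_n for all n ≥ 0, and set m_{s,n} := m_s(x_n, x_n, x_{n+1}). Then for all n ≥ 0, m_{s,n} ≤ μ^n · m_{s,0}, where μ = λ/(1 − λ) < 1; in particular lim_{n→∞} m_s(x_n, x_n, x_{n+1}) = 0. -/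
open Filter Topology

/-- For a Kannan-type contraction, the Picard sequence satisfies
`mₛₙ ≤ μⁿ · mₛ₀` with `μ = λ/(1−λ) < 1`; in particular `mₛ(xₙ,xₙ,xₙ₊₁) → 0`. -/
theorem picard_geometric_of_kannanContraction {X : Type*} (m : X → X → X → ℝ)
    (hm : IsMsMetric m) (T : X → X) (lam : ℝ)
    (hl0 : 0 ≤ lam) (hl1 : lam < 1 / 2)
    (hT : ∀ x y, m (T x) (T x) (T y) ≤ lam * (m x x (T x) + m y y (T y)))
    (x₀ : X) :
    lam / (1 - lam) < 1 ∧
    (∀ n : ℕ, m (T^[n] x₀) (T^[n] x₀) (T^[n + 1] x₀) ≤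
      (lam / (1 - lam)) ^ n * m x₀ x₀ (T x₀)) ∧
    Tendsto (fun n => m (T^[n] x₀) (T^[n] x₀) (T^[n + 1] x₀)) atTop (nhds 0) := by

  set μ := lam / (1 - lam) with hμ
  have h1l : 0 < 1 - lam := by linarith
  have hμ0 : 0 ≤ μ := div_nonneg hl0 h1l.le
  have hμ1 : μ < 1 := by rw [hμ, div_lt_one h1l]; linarith
  have key : ∀ n : ℕ, m (T^[n] x₀) (T^[n] x₀) (T^[n + 1] x₀) ≤
      μ ^ n * m x₀ x₀ (T x₀) := by
    intro n
    induction n with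
    | zero => simp
    | succ n ih =>
      have h := hT (T^[n] x₀) (T^[n+1] x₀)
      rw [← Function.iterate_succ_apply' T n x₀, ← Function.iterate_succ_apply' T (n+1) x₀] at h
      -- h : m (x_{n+1}) (x_{n+1}) (x_{n+2}) ≤ lam * (m_n + m_{n+1})
      have step : m (T^[n+1] x₀) (T^[n+1] x₀) (T^[n + 2] x₀) ≤
          μ * m (T^[n] x₀) (T^[n] x₀) (T^[n+1] x₀) := by
        rw [hμ, div_mul_eq_mul_div, le_div_iff₀ h1l]
        nlinarith [h]
      calc m (T^[n+1] x₀) (T^[n+1] x₀) (T^[n + 1 + 1] x₀)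
          ≤ μ * m (T^[n] x₀) (T^[n] x₀) (T^[n+1] x₀) := step
        _ ≤ μ * (μ ^ n * m x₀ x₀ (T x₀)) := by
            exact mul_le_mul_of_nonneg_left ih hμ0
        _ = μ ^ (n+1) * m x₀ x₀ (T x₀) := by ring
  refine ⟨hμ1, key, ?_⟩
  have htend : Tendsto (fun n : ℕ => μ ^ n * m x₀ x₀ (T x₀)) atTop (nhds 0) := by
    simpa using (tendsto_pow_atTop_nhds_zero_of_lt_one hμ0 hμ1).mul_const (m x₀ x₀ (T x₀))
  exact squeeze_zero (fun n => hm.nonneg _ _ _) key htend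
end

section
/- Let (X, m_s) be an M_s-metric space and T : X → X a self mapping such that m_s(Tx, Tx, Ty) ≤ λ[m_s(x,x,Tx) + m_s(y,y,Ty)] for all x, y ∈ X, where λ ∈ [0,1/2). If u, v ∈ X are fixed points of T (i.e. Tu = u and Tv = v), then u = v. -/
open Filter Topology

/-- Fixed points of a Kannan-type contraction are unique. -/
theorem fixedPoint_unique_of_kannan {X : Type*} (m : X → X → X → ℝ)
    (hm : IsMsMetric m) (T : X → X) (lam : ℝ)
    (hl0 : 0 ≤ lam) (hl1 : lam < 1 / 2)
    (hT : ∀ x y, m (T x) (T x) (T y) ≤ lam * (m x x (T x) + m y y (T y)))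
    (u v : X) (hu : T u = u) (hv : T v = v) : u = v := by
  have hu0 : m u u u = 0 := by
    have h := hT u u
    rw [hu] at h
    nlinarith [hm.nonneg u u u]
  have hv0 : m v v v = 0 := by
    have h := hT v v
    rw [hv] at h
    nlinarith [hm.nonneg v v v]
  have huv : m u u v = 0 := by
    have h := hT u v
    rw [hu, hv] at h
    nlinarith [hm.nonneg u u v]
  exact (hm.eq_iff u v).mp ⟨by rw [hu0, hv0], by rw [hv0, huv]⟩
end

section
/- Let (X, m_s) be a complete M_s-metric space and T : X → X a self mapping such that m_s(Tx, Ty, Tz) ≤ m_s(x,y,z) − φ(m_s(x,y,z)) for all x, y, z ∈ X, where φ : [0,∞) → [0,∞) is continuous, non-decreasing, φ(t) = 0 if and only if t = 0, and φ(t) > 0 for all t > 0. Then T has a unique fixed point in X. -/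
open Filter Topology

/-- Auxiliary: if `u (n+1) ≤ u n - φ (u n)` with `u ≥ 0`, then `u → 0`. -/
lemma tendsto_zero_of_phi_step (phi : ℝ → ℝ)
    (hphi_nonneg : ∀ t, 0 ≤ t → 0 ≤ phi t)
    (hphi_mono : MonotoneOn phi (Set.Ici 0))
    (hphi_pos : ∀ t, 0 < t → 0 < phi t)
    (u : ℕ → ℝ) (hu0 : ∀ n, 0 ≤ u n)
    (hstep : ∀ n, u (n + 1) ≤ u n - phi (u n)) :
    Tendsto u atTop (nhds 0) := by
  have hanti : Antitone u := antitone_nat_of_succ_le (fun n => by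
    have h1 := hstep n
    have h2 := hphi_nonneg (u n) (hu0 n)
    linarith)
  have hbdd : BddBelow (Set.range u) := ⟨0, by rintro y ⟨n, rfl⟩; exact hu0 n⟩
  have htend : Tendsto u atTop (nhds (⨅ n, u n)) := tendsto_atTop_ciInf hanti hbdd
  set r := ⨅ n, u n with hr
  have hr0 : 0 ≤ r := le_ciInf hu0
  have hrle : ∀ n, r ≤ u n := fun n => ciInf_le hbdd n
  have hrz : r = 0 := by
    by_contra h
    have hrpos : 0 < r := lt_of_le_of_ne hr0 (Ne.symm h)
    have hd : Tendsto (fun n => u n - u (n + 1)) atTop (nhds 0) := by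
      have := htend.sub (htend.comp (tendsto_add_atTop_nat 1))
      simpa using this
    have hle : phi r ≤ 0 := by
      refine ge_of_tendsto' hd (fun n => ?_)
      have h1 := hphi_mono (Set.mem_Ici.mpr hr0) (Set.mem_Ici.mpr (hu0 n)) (hrle n)
      have h2 := hstep n
      linarith
    linarith [hphi_pos r hrpos]
  rw [hrz] at htend
  exact htend

/-- Theorem 3 (weak φ-contraction in a complete Mₛ-metric space): `T` has a unique
fixed point. -/
theorem fixedPoint_of_phiContraction {X : Type*} [Nonempty X] (m : X → X → X → ℝ)
    (hm : IsMsMetric m) (hcomp : MsComplete m) (T : X → X) (phi : ℝ → ℝ)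
    (hphi_nonneg : ∀ t, 0 ≤ t → 0 ≤ phi t)
    (hphi_cont : ContinuousOn phi (Set.Ici 0))
    (hphi_mono : MonotoneOn phi (Set.Ici 0))
    (hphi_zero : ∀ t, 0 ≤ t → (phi t = 0 ↔ t = 0))
    (hphi_pos : ∀ t, 0 < t → 0 < phi t)
    (hT : ∀ x y z, m (T x) (T y) (T z) ≤ m x y z - phi (m x y z)) :
    ∃! u : X, T u = u := by
  obtain ⟨x0⟩ := ‹Nonempty X›
  set x : ℕ → X := fun n => T^[n] x0 with hxdef
  have hxs : ∀ n, x (n + 1) = T (x n) := fun n => Function.iterate_succ_apply' T n x0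
  have hphi0 : phi 0 = 0 := (hphi_zero 0 le_rfl).mpr rfl
  have hmin_nonneg : ∀ a b c : X, 0 ≤ msmin m a b c := fun a b c =>
    le_min (hm.nonneg _ _ _) (le_min (hm.nonneg _ _ _) (hm.nonneg _ _ _))
  have hmin_fst : ∀ a b c : X, msmin m a b c ≤ m a a a := fun a b c => min_le_left _ _
  -- s n → 0
  have hs : Tendsto (fun n => m (x n) (x n) (x n)) atTop (nhds 0) := by
    refine tendsto_zero_of_phi_step phi hphi_nonneg hphi_mono hphi_pos _
      (fun n => hm.nonneg _ _ _) (fun n => ?_)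
    rw [hxs n]
    exact hT (x n) (x n) (x n)
  -- d n → 0
  have hd : Tendsto (fun n => m (x n) (x n) (x (n + 1))) atTop (nhds 0) := by
    refine tendsto_zero_of_phi_step phi hphi_nonneg hphi_mono hphi_pos _
      (fun n => hm.nonneg _ _ _) (fun n => ?_)
    have h := hT (x n) (x n) (x (n + 1))
    rw [← hxs (n + 1), ← hxs n] at h
    exact h
  -- key Cauchy estimate
  have key : ∀ ε > (0:ℝ), ∃ N, ∀ p q, N ≤ p → N ≤ q → m (x p) (x p) (x q) ≤ ε := by
    intro ε hε
    set δ := min (ε / 2) (phi (ε / 2)) with hδdef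
    have hδpos : 0 < δ := lt_min (by linarith) (hphi_pos _ (by linarith))
    have hδ1 : δ ≤ ε / 2 := min_le_left _ _
    have hδ2 : δ ≤ phi (ε / 2) := min_le_right _ _
    have h1 : Tendsto (fun n => m (x n) (x n) (x n) + 2 * m (x n) (x n) (x (n + 1)))
        atTop (nhds 0) := by
      have := hs.add (hd.const_mul 2)
      simpa [mul_comm] using this
    obtain ⟨N, hN⟩ := (h1.eventually_lt_const hδpos).exists
    have hbase : ∀ k, m (x N) (x N) (x (N + k)) ≤ ε := by
      intro k
      induction k with
      | zero =>
        have h2 := hm.nonneg (x N) (x N) (x (N + 1))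
        simp only [Nat.add_zero]
        linarith
      | succ k ih =>
        have hE : m (x (N + 1)) (x (N + 1)) (x (N + k + 1)) ≤
            m (x N) (x N) (x (N + k)) - phi (m (x N) (x N) (x (N + k))) := by
          rw [hxs N, hxs (N + k)]
          exact hT (x N) (x N) (x (N + k))
        have hineq := hm.ineq (x N) (x N) (x (N + k + 1)) (x (N + 1))
        have hsymm : m (x (N + k + 1)) (x (N + k + 1)) (x (N + 1)) =
            m (x (N + 1)) (x (N + 1)) (x (N + k + 1)) := hm.symm _ _
        have n1 := hmin_nonneg (x N) (x N) (x (N + 1))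
        have n2 := hmin_nonneg (x (N + k + 1)) (x (N + k + 1)) (x (N + 1))
        have n3 := hmin_fst (x N) (x N) (x (N + k + 1))
        have hDnn := hm.nonneg (x N) (x N) (x (N + k))
        have goalEq : N + (k + 1) = N + k + 1 := by omega
        rw [goalEq]
        by_cases hc : m (x N) (x N) (x (N + k)) ≤ ε / 2
        · have hφnn := hphi_nonneg _ hDnn
          linarith
        · push_neg at hc
          have hφ : phi (ε / 2) ≤ phi (m (x N) (x N) (x (N + k))) :=
            hphi_mono (Set.mem_Ici.mpr (by linarith)) (Set.mem_Ici.mpr hDnn) (le_of_lt hc)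
          linarith [ih]
    have hall : ∀ j k, m (x (N + j)) (x (N + j)) (x (N + j + k)) ≤ ε := by
      intro j
      induction j with
      | zero => simpa using hbase
      | succ j ih =>
        intro k
        have e1 : x (N + (j + 1)) = T (x (N + j)) := by
          rw [show N + (j + 1) = (N + j) + 1 from by omega]; exact hxs _
        have e2 : x (N + (j + 1) + k) = T (x (N + j + k)) := by
          rw [show N + (j + 1) + k = (N + j + k) + 1 from by omega]; exact hxs _
        rw [e1, e2]
        have h := hT (x (N + j)) (x (N + j)) (x (N + j + k))
        have hφnn := hphi_nonneg _ (hm.nonneg (x (N + j)) (x (N + j)) (x (N + j + k)))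
        linarith [ih k]
    refine ⟨N, fun p q hp hq => ?_⟩
    rcases le_total p q with h | h
    · have h2 := hall (p - N) (q - p)
      rwa [show N + (p - N) = p from by omega, show p + (q - p) = q from by omega] at h2
    · have h2 := hall (q - N) (p - q)
      rw [show N + (q - N) = q from by omega, show q + (p - q) = p from by omega] at h2
      rw [hm.symm (x p) (x q)]
      exact h2
  -- Cauchy
  have hcauchy : MsCauchy m x := by
    constructor
    · refine ⟨0, ?_⟩
      rw [Metric.tendsto_nhds]
      intro ε hε
      obtain ⟨N, hN⟩ := key (ε / 2) (by linarith)
      rw [eventually_atTop]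
      refine ⟨(N, N), fun p hp => ?_⟩
      have hub := hN p.1 p.2 hp.1 hp.2
      have hlb : 0 ≤ m (x p.1) (x p.1) (x p.2) - msmin m (x p.1) (x p.1) (x p.2) :=
        sub_nonneg.mpr (hm.min_le _ _ _)
      have hmn := hmin_nonneg (x p.1) (x p.1) (x p.2)
      rw [Real.dist_eq, sub_zero, abs_of_nonneg hlb]
      linarith
    · refine ⟨0, ?_⟩
      rw [Metric.tendsto_nhds]
      intro ε hε
      obtain ⟨N, hN⟩ := eventually_atTop.mp (hs.eventually_lt_const (show (0:ℝ) < ε / 2 by linarith))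
      rw [eventually_atTop]
      refine ⟨(N, N), fun p hp => ?_⟩
      have h1 := hN p.1 hp.1
      have h2 := hN p.2 hp.2
      have hlb : msmin m (x p.1) (x p.1) (x p.2) ≤ msmax m (x p.1) (x p.1) (x p.2) :=
        le_trans (min_le_left _ _) (le_max_left _ _)
      have hub : msmax m (x p.1) (x p.1) (x p.2) ≤ ε / 2 :=
        max_le (le_of_lt h1) (max_le (le_of_lt h1) (le_of_lt h2))
      have hmn := hmin_nonneg (x p.1) (x p.1) (x p.2)
      rw [Real.dist_eq, sub_zero, abs_of_nonneg (by linarith)]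
      linarith
  obtain ⟨a, ha1, ha2⟩ := hcomp x hcauchy
  -- msmin (x n) (x n) a → 0
  have hminlim : Tendsto (fun n => msmin m (x n) (x n) a) atTop (nhds 0) := by
    have h := hs.min (hs.min (tendsto_const_nhds (x := m a a a)))
    have h0 : min (0:ℝ) (min 0 (m a a a)) = 0 :=
      min_eq_left (le_min le_rfl (hm.nonneg a a a))
    rw [h0] at h
    exact h
  have h3 : Tendsto (fun n => m (x n) (x n) a) atTop (nhds 0) := by
    have := ha1.add hminlim
    simpa using this
  have hmaxlim : Tendsto (fun n => msmax m (x n) (x n) a) atTop (nhds 0) := by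
    have := ha2.add hminlim
    simpa using this
  have hmax2 : Tendsto (fun n => msmax m (x n) (x n) a) atTop (nhds (m a a a)) := by
    have h := hs.max (hs.max (tendsto_const_nhds (x := m a a a)))
    have h0 : max (0:ℝ) (max 0 (m a a a)) = m a a a := by
      rw [max_eq_right (hm.nonneg a a a), max_eq_right (hm.nonneg a a a)]
    rw [h0] at h
    exact h
  have haa : m a a a = 0 := tendsto_nhds_unique hmax2 hmaxlim
  have hTa3 : m (T a) (T a) (T a) = 0 := by
    have h := hT a a a
    rw [haa, hphi0] at h
    exact le_antisymm (by linarith) (hm.nonneg _ _ _)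
  have h4 : Tendsto (fun n => m (x (n + 1)) (x (n + 1)) (T a)) atTop (nhds 0) := by
    refine tendsto_of_tendsto_of_tendsto_of_le_of_le tendsto_const_nhds h3
      (fun n => hm.nonneg _ _ _) (fun n => ?_)
    have h := hT (x n) (x n) a
    rw [← hxs n] at h
    have hφnn := hphi_nonneg _ (hm.nonneg (x n) (x n) a)
    linarith
  have hminT : msmin m a a (T a) = 0 := by
    simp [msmin, haa, hTa3]
  have haaT : m a a (T a) = 0 := by
    have hg : Tendsto (fun n => 2 * m (x (n + 1)) (x (n + 1)) a + m (x (n + 1)) (x (n + 1)) (T a))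
        atTop (nhds 0) := by
      have h5 := ((h3.comp (tendsto_add_atTop_nat 1)).const_mul 2).add h4
      simpa using h5
    have hle : m a a (T a) ≤ 0 := by
      refine ge_of_tendsto' hg (fun n => ?_)
      have h := hm.ineq a a (T a) (x (n + 1))
      have s1 : m a a (x (n + 1)) = m (x (n + 1)) (x (n + 1)) a := hm.symm _ _
      have s2 : m (T a) (T a) (x (n + 1)) = m (x (n + 1)) (x (n + 1)) (T a) := hm.symm _ _
      have n1 := hmin_nonneg a a (x (n + 1))
      have n2 := hmin_nonneg (T a) (T a) (x (n + 1))
      rw [hminT] at h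
      linarith
    exact le_antisymm hle (hm.nonneg _ _ _)
  have hfix : T a = a :=
    ((hm.eq_iff a (T a)).mp ⟨by rw [haa, hTa3], by rw [hTa3, haaT]⟩).symm
  refine ⟨a, hfix, fun v hv => ?_⟩
  have hv3 : m v v v = 0 := by
    have h1 := hT v v v
    rw [hv] at h1
    by_contra hne
    have hpos : 0 < m v v v := lt_of_le_of_ne (hm.nonneg _ _ _) (Ne.symm hne)
    linarith [hphi_pos _ hpos]
  have hva : m v v a = 0 := by
    have h1 := hT v v a
    rw [hv, hfix] at h1
    by_contra hne
    have hpos : 0 < m v v a := lt_of_le_of_ne (hm.nonneg _ _ _) (Ne.symm hne)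
    linarith [hphi_pos _ hpos]
  exact (hm.eq_iff v a).mp ⟨by rw [hv3, haa], by rw [haa, hva]⟩
end

section
/- Let (X, m_s) be an M_s-metric space and T : X → X a self mapping such that m_s(Tx, Ty, Tz) ≤ m_s(x,y,z) − φ(m_s(x,y,z)) for all x, y, z ∈ X, where φ : [0,∞) → [0,∞) is continuous, non-decreasing, φ(t) = 0 if and only if t = 0, and φ(t) > 0 for all t > 0. Fix x_0 ∈ X and define x_{n+1} = T x_n for all n ≥ 0. Then the sequence n ↦ m_s(x_n, x_{n+1}, x_{n+1}) is monotone non-increasing and lim_{n→∞} m_s(x_n, x_{n+1}, x_{n+1}) = 0. -/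
open Filter Topology

/-- For a weak φ-contraction, `n ↦ mₛ(xₙ, xₙ₊₁, xₙ₊₁)` along the Picard sequence is
monotone non-increasing and tends to `0`. -/
theorem picard_antitone_of_phiContraction {X : Type*} (m : X → X → X → ℝ)
    (hm : IsMsMetric m) (T : X → X) (phi : ℝ → ℝ)
    (hphi_nonneg : ∀ t, 0 ≤ t → 0 ≤ phi t)
    (hphi_cont : ContinuousOn phi (Set.Ici 0))
    (hphi_mono : MonotoneOn phi (Set.Ici 0))
    (hphi_zero : ∀ t, 0 ≤ t → (phi t = 0 ↔ t = 0))
    (hphi_pos : ∀ t, 0 < t → 0 < phi t)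
    (hT : ∀ x y z, m (T x) (T y) (T z) ≤ m x y z - phi (m x y z))
    (x₀ : X) :
    Antitone (fun n => m (T^[n] x₀) (T^[n + 1] x₀) (T^[n + 1] x₀)) ∧
    Tendsto (fun n => m (T^[n] x₀) (T^[n + 1] x₀) (T^[n + 1] x₀)) atTop (nhds 0) := by

  set a : ℕ → ℝ := fun n => m (T^[n] x₀) (T^[n + 1] x₀) (T^[n + 1] x₀) with ha
  have hnn : ∀ n, 0 ≤ a n := fun n => hm.nonneg _ _ _
  have hstep : ∀ n, a (n + 1) ≤ a n - phi (a n) := by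
    intro n
    have := hT (T^[n] x₀) (T^[n+1] x₀) (T^[n+1] x₀)
    simpa [ha, Function.iterate_succ_apply'] using this
  have hanti : Antitone a := by
    apply antitone_nat_of_succ_le
    intro n
    have := hstep n
    have hp := hphi_nonneg (a n) (hnn n)
    linarith
  refine ⟨hanti, ?_⟩
  have hbdd : BddBelow (Set.range a) := ⟨0, by rintro _ ⟨n, rfl⟩; exact hnn n⟩
  have htend : Tendsto a atTop (nhds (⨅ n, a n)) := tendsto_atTop_ciInf hanti hbdd
  set L := ⨅ n, a n with hL
  have hL0 : 0 ≤ L := le_ciInf hnn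
  have hLnhdsW : Tendsto a atTop (nhdsWithin L (Set.Ici 0)) :=
    tendsto_nhdsWithin_of_tendsto_nhds_of_eventually_within a htend
      (Filter.Eventually.of_forall hnn)
  have hphiL : Tendsto (fun n => phi (a n)) atTop (nhds (phi L)) :=
    (hphi_cont L hL0).tendsto.comp hLnhdsW
  have htend1 : Tendsto (fun n => a (n + 1)) atTop (nhds L) :=
    htend.comp (tendsto_add_atTop_nat 1)
  have hLe : L ≤ L - phi L :=
    le_of_tendsto_of_tendsto' htend1 (htend.sub hphiL) hstep
  have hphiL0 : phi L = 0 := le_antisymm (by linarith) (hphi_nonneg L hL0)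
  have : L = 0 := (hphi_zero L hL0).mp hphiL0
  rw [← this]
  exact htend
end

section
/- Let (X, m_s) be an M_s-metric space and T : X → X a self mapping such that m_s(Tx, Ty, Tz) ≤ m_s(x,y,z) − φ(m_s(x,y,z)) for all x, y, z ∈ X, where φ : [0,∞) → [0,∞) is continuous, non-decreasing, φ(t) = 0 if and only if t = 0, and φ(t) > 0 for all t > 0. If u, v ∈ X are fixed points of T (i.e. Tu = u and Tv = v), then m_s(u,u,v) = 0, m_s(u,u,u) = 0, m_s(v,v,v) = 0, and u = v. -/
open Filter Topology

/-- Fixed points of a weak φ-contraction: zero distances and uniqueness. -/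
theorem fixedPoint_unique_of_phiContraction {X : Type*} (m : X → X → X → ℝ)
    (hm : IsMsMetric m) (T : X → X) (phi : ℝ → ℝ)
    (hphi_nonneg : ∀ t, 0 ≤ t → 0 ≤ phi t)
    (hphi_cont : ContinuousOn phi (Set.Ici 0))
    (hphi_mono : MonotoneOn phi (Set.Ici 0))
    (hphi_zero : ∀ t, 0 ≤ t → (phi t = 0 ↔ t = 0))
    (hphi_pos : ∀ t, 0 < t → 0 < phi t)
    (hT : ∀ x y z, m (T x) (T y) (T z) ≤ m x y z - phi (m x y z))
    (u v : X) (hu : T u = u) (hv : T v = v) :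
    m u u v = 0 ∧ m u u u = 0 ∧ m v v v = 0 ∧ u = v := by
  have key : ∀ a b : X, T a = a → T b = b → m a a b = 0 := by
    intro a b ha hb
    have h := hT a a b
    rw [ha, hb] at h
    have h1 : phi (m a a b) ≤ 0 := by linarith
    have h2 : 0 ≤ phi (m a a b) := hphi_nonneg _ (hm.nonneg a a b)
    exact (hphi_zero _ (hm.nonneg a a b)).mp (le_antisymm h1 h2)
  have huuv := key u v hu hv
  have huuu := key u u hu hu
  have hvvv := key v v hv hv
  exact ⟨huuv, huuu, hvvv, (hm.eq_iff u v).mp ⟨by rw [huuu, hvvv], by rw [hvvv, huuv]⟩⟩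
end

section
/- Let (X, m_s) be an M_s-metric space and T : X → X a self mapping such that m_s(Tx, Tx, Ty) ≤ λ[m_s(x,x,Tx) + m_s(y,y,Ty)] for all x, y ∈ X, where λ ∈ [0,1/2). Fix x_0 ∈ X and define x_{n+1} = T x_n for all n ≥ 0. Then the Picard sequence {x_n} is M_s-Cauchy; in fact, m_s(x_n,x_n,x_m) − m_{s,x_n,x_n,x_m} → 0 and M_{s,x_n,x_n,x_m} − m_{s,x_n,x_n,x_m} → 0 as n, m → ∞. -/
open Filter Topology

/-- The Picard sequence of a Kannan-type contraction is Mₛ-Cauchy; in fact both double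
limits are `0`. -/
theorem picard_msCauchy_of_kannanContraction {X : Type*} (m : X → X → X → ℝ)
    (hm : IsMsMetric m) (T : X → X) (lam : ℝ)
    (hl0 : 0 ≤ lam) (hl1 : lam < 1 / 2)
    (hT : ∀ x y, m (T x) (T x) (T y) ≤ lam * (m x x (T x) + m y y (T y)))
    (x₀ : X) :
    MsCauchy m (fun n => T^[n] x₀) ∧
    Tendsto (fun p : ℕ × ℕ =>
        m (T^[p.1] x₀) (T^[p.1] x₀) (T^[p.2] x₀) -
          msmin m (T^[p.1] x₀) (T^[p.1] x₀) (T^[p.2] x₀)) atTop (nhds 0) ∧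
    Tendsto (fun p : ℕ × ℕ =>
        msmax m (T^[p.1] x₀) (T^[p.1] x₀) (T^[p.2] x₀) -
          msmin m (T^[p.1] x₀) (T^[p.1] x₀) (T^[p.2] x₀)) atTop (nhds 0) := by
  have h1l : (0:ℝ) < 1 - lam := by linarith
  set r : ℝ := lam / (1 - lam) with hrdef
  have hr0 : 0 ≤ r := div_nonneg hl0 h1l.le
  have hr1 : r < 1 := by rw [hrdef, div_lt_one h1l]; linarith
  set d : ℕ → ℝ := fun n => m (T^[n] x₀) (T^[n] x₀) (T^[n+1] x₀) with hddef
  have hdnn : ∀ n, 0 ≤ d n := fun n => hm.nonneg _ _ _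
  have hstep : ∀ n : ℕ, T^[n+1] x₀ = T (T^[n] x₀) := fun n =>
    Function.iterate_succ_apply' T n x₀
  have hd : ∀ n, d (n+1) ≤ r * d n := by
    intro n
    have h := hT (T^[n] x₀) (T^[n+1] x₀)
    rw [← hstep n, ← hstep (n+1)] at h
    rw [hrdef, div_mul_eq_mul_div, le_div_iff₀ h1l]
    have h1 := hdnn (n+1)
    simp only [hddef] at h h1 ⊢
    nlinarith
  have hgeo : ∀ n, d n ≤ r^n * d 0 := by
    intro n; induction n with
    | zero => simp
    | succ n ih =>
      calc d (n+1) ≤ r * d n := hd n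
        _ ≤ r * (r^n * d 0) := mul_le_mul_of_nonneg_left ih hr0
        _ = r^(n+1) * d 0 := by ring
  have hself : ∀ n, m (T^[n+1] x₀) (T^[n+1] x₀) (T^[n+1] x₀) ≤ 2 * lam * d n := by
    intro n
    have h := hT (T^[n] x₀) (T^[n] x₀)
    rw [← hstep n] at h
    simp only [hddef] at h ⊢
    linarith
  have hcross : ∀ n k, m (T^[n+1] x₀) (T^[n+1] x₀) (T^[k+1] x₀) ≤ lam * (d n + d k) := by
    intro n k
    have h := hT (T^[n] x₀) (T^[k] x₀)
    rw [← hstep n, ← hstep k] at h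
    simpa [hddef] using h
  set b : ℕ → ℝ := fun k => d 0 * r^(k-1) with hbdef
  have hb : Tendsto b atTop (nhds 0) := by
    have h0 : Tendsto (fun k : ℕ => d 0 * r^k) atTop (nhds 0) := by
      simpa using (tendsto_pow_atTop_nhds_zero_of_lt_one hr0 hr1).const_mul (d 0)
    exact h0.comp (tendsto_sub_atTop_nat 1)
  have hB : Tendsto (fun p : ℕ × ℕ => b p.1 + b p.2) atTop (nhds 0) := by
    rw [← prod_atTop_atTop_eq]
    simpa using (hb.comp tendsto_fst).add (hb.comp tendsto_snd)
  have hminnn : ∀ a c e : X, 0 ≤ msmin m a c e := fun a c e =>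
    le_min (hm.nonneg _ _ _) (le_min (hm.nonneg _ _ _) (hm.nonneg _ _ _))
  have hminmax : ∀ a c e : X, msmin m a c e ≤ msmax m a c e := fun a c e =>
    le_trans (min_le_left _ _) (le_max_left _ _)
  have hev : ∀ᶠ p : ℕ × ℕ in atTop, 1 ≤ p.1 ∧ 1 ≤ p.2 := by
    rw [← prod_atTop_atTop_eq]
    exact Filter.Eventually.prod_mk (eventually_ge_atTop 1) (eventually_ge_atTop 1)
  have hrpow : ∀ n : ℕ, 0 ≤ r^n * d 0 := fun n => mul_nonneg (pow_nonneg hr0 n) (hdnn 0)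
  have hbound : ∀ n : ℕ, d n ≤ b (n+1) := by
    intro n
    have : b (n+1) = d 0 * r^n := by simp [hbdef]
    rw [this]
    calc d n ≤ r^n * d 0 := hgeo n
      _ = d 0 * r^n := by ring
  have hF₁ : Tendsto (fun p : ℕ × ℕ =>
      m (T^[p.1] x₀) (T^[p.1] x₀) (T^[p.2] x₀) -
        msmin m (T^[p.1] x₀) (T^[p.1] x₀) (T^[p.2] x₀)) atTop (nhds 0) := by
    refine squeeze_zero' (Eventually.of_forall fun p => ?_) ?_ hB
    · exact sub_nonneg.2 (hm.min_le _ _ _)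
    · filter_upwards [hev] with p hp
      obtain ⟨n, hn⟩ := Nat.exists_eq_succ_of_ne_zero (by omega : p.1 ≠ 0)
      obtain ⟨k, hk⟩ := Nat.exists_eq_succ_of_ne_zero (by omega : p.2 ≠ 0)
      rw [hn, hk]
      have h1 := hcross n k
      have h2 := hminnn (T^[n+1] x₀) (T^[n+1] x₀) (T^[k+1] x₀)
      have h3 := hbound n
      have h4 := hbound k
      have h5 := hdnn n
      have h6 := hdnn k
      nlinarith
  have hF₂ : Tendsto (fun p : ℕ × ℕ =>
      msmax m (T^[p.1] x₀) (T^[p.1] x₀) (T^[p.2] x₀) -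
        msmin m (T^[p.1] x₀) (T^[p.1] x₀) (T^[p.2] x₀)) atTop (nhds 0) := by
    refine squeeze_zero' (Eventually.of_forall fun p => ?_) ?_ hB
    · exact sub_nonneg.2 (hminmax _ _ _)
    · filter_upwards [hev] with p hp
      obtain ⟨n, hn⟩ := Nat.exists_eq_succ_of_ne_zero (by omega : p.1 ≠ 0)
      obtain ⟨k, hk⟩ := Nat.exists_eq_succ_of_ne_zero (by omega : p.2 ≠ 0)
      rw [hn, hk]
      have hA := hself n
      have hBk := hself k
      have h2 := hminnn (T^[n+1] x₀) (T^[n+1] x₀) (T^[k+1] x₀)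
      have h3 := hbound n
      have h4 := hbound k
      have h5 := hdnn n
      have h6 := hdnn k
      have hAnn := hm.nonneg (T^[n+1] x₀) (T^[n+1] x₀) (T^[n+1] x₀)
      have hBnn := hm.nonneg (T^[k+1] x₀) (T^[k+1] x₀) (T^[k+1] x₀)
      have hmax : msmax m (T^[n+1] x₀) (T^[n+1] x₀) (T^[k+1] x₀) ≤
          m (T^[n+1] x₀) (T^[n+1] x₀) (T^[n+1] x₀) +
          m (T^[k+1] x₀) (T^[k+1] x₀) (T^[k+1] x₀) := by
        unfold msmax
        exact max_le (by linarith) (max_le (by linarith) (by linarith))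
      nlinarith
  exact ⟨⟨⟨0, hF₁⟩, ⟨0, hF₂⟩⟩, hF₁, hF₂⟩
end
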